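/- Suppose ∇f is L₁-Lipschitz on E with L₁ > 0 and the IRPN iteration hypotheses hold. Then r(x^k) → 0 as k → ∞. Consequently, every cluster point x* of the sequence {x^k} satisfies r(x*) = 0 and x* ∈ X, i.e., x* minimizes F. -/

import Mathlib

open Filter Topology
open scoped RealInnerProductSpace

abbrev E (n : ℕ) := EuclideanSpace ℝ (Fin n)

lemma aux_grad_le {n : ℕ} {f : E n → ℝ} {f' : E n → E n}
    (hfconv : ConvexOn ℝ Set.univ f) (hgrad : ∀ x, HasGradientAt f (f' x) x)
    (x y : E n) : f x + ⟪f' x, y - x⟫ ≤ f y := by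
  set φ : ℝ → ℝ := fun t => f (x + t • (y - x)) with hφ
  have hderiv : HasDerivAt φ ⟪f' x, y - x⟫ 0 := by
    have hc : HasDerivAt (fun t : ℝ => x + t • (y - x)) (y - x) 0 := by
      simpa using ((hasDerivAt_id (0:ℝ)).smul_const (y - x)).const_add x
    have h2 := (hgrad x).hasFDerivAt
    have h3 : HasFDerivAt f (InnerProductSpace.toDual ℝ (E n) (f' x)) (x + (0:ℝ) • (y - x)) := by
      simpa using h2
    have h4 := h3.comp_hasDerivAt 0 hc
    rw [InnerProductSpace.toDual_apply_apply] at h4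
    exact h4
  have hslope : Tendsto (slope φ 0) (𝓝[>] 0) (𝓝 ⟪f' x, y - x⟫) :=
    (hasDerivAt_iff_tendsto_slope.1 hderiv).mono_left
      (nhdsWithin_mono _ (fun t ht => ne_of_gt ht))
  have hbound : ∀ᶠ t in 𝓝[>] (0:ℝ), slope φ 0 t ≤ f y - f x := by
    filter_upwards [Ioc_mem_nhdsGT_of_mem ⟨le_refl (0:ℝ), zero_lt_one⟩] with t ht
    have ht0 : 0 < t := ht.1
    have ht1 : t ≤ 1 := ht.2
    have hcvx := hfconv.2 (Set.mem_univ x) (Set.mem_univ y)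
      (by linarith : (0:ℝ) ≤ 1 - t) ht0.le (by ring)
    have hpt : (1 - t) • x + t • y = x + t • (y - x) := by module
    rw [hpt] at hcvx
    have hφ0 : φ 0 = f x := by simp [hφ]
    rw [slope_def_field, hφ0, sub_zero, div_le_iff₀ ht0]
    simp only [smul_eq_mul] at hcvx
    nlinarith [hcvx]
  have := le_of_tendsto hslope hbound
  linarith

lemma aux_mono {n : ℕ} {f : E n → ℝ} {f' : E n → E n}
    (hfg : ∀ x y : E n, f x + ⟪f' x, y - x⟫ ≤ f y)
    (x y : E n) : 0 ≤ ⟪f' y - f' x, y - x⟫ := by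
  have h1 := hfg x y
  have h2 := hfg y x
  have e1 : ⟪f' y, x - y⟫ = -⟪f' y, y - x⟫ := by
    rw [← inner_neg_right]; congr 1; abel
  rw [e1] at h2
  have : ⟪f' y - f' x, y - x⟫ = ⟪f' y, y - x⟫ - ⟪f' x, y - x⟫ := by
    rw [inner_sub_left]
  linarith

lemma aux_curve_deriv {n : ℕ} {f' : E n → E n} {hess : E n → E n →L[ℝ] E n}
    (hhess : ∀ x, HasFDerivAt f' (hess x) x) (x v : E n) :
    HasDerivAt (fun t : ℝ => f' (x + t • v)) (hess x v) 0 := by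
  have hc : HasDerivAt (fun t : ℝ => x + t • v) v 0 := by
    simpa using ((hasDerivAt_id (0:ℝ)).smul_const v).const_add x
  have h3 : HasFDerivAt f' (hess x) (x + (0:ℝ) • v) := by simpa using hhess x
  exact h3.comp_hasDerivAt 0 hc

lemma aux_hess_psd {n : ℕ} {f' : E n → E n} {hess : E n → E n →L[ℝ] E n}
    (hmono : ∀ x y : E n, 0 ≤ ⟪f' y - f' x, y - x⟫)
    (hhess : ∀ x, HasFDerivAt f' (hess x) x) (x v : E n) :
    0 ≤ ⟪hess x v, v⟫ := by
  set w : ℝ → ℝ := fun t => ⟪f' (x + t • v), v⟫ with hw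
  have hderiv : HasDerivAt w ⟪hess x v, v⟫ 0 :=
    (aux_curve_deriv hhess x v).inner ℝ (hasDerivAt_const 0 v) |>.congr_deriv (by simp)
  have hslope : Tendsto (slope w 0) (𝓝[>] 0) (𝓝 ⟪hess x v, v⟫) :=
    (hasDerivAt_iff_tendsto_slope.1 hderiv).mono_left
      (nhdsWithin_mono _ (fun t ht => ne_of_gt ht))
  refine ge_of_tendsto hslope ?_
  filter_upwards [self_mem_nhdsWithin] with t (ht : 0 < t)
  have h1 := hmono x (x + t • v)
  have e : (x + t • v) - x = t • v := by abel
  rw [e, real_inner_smul_right] at h1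
  have h2 : 0 ≤ ⟪f' (x + t • v) - f' x, v⟫ := nonneg_of_mul_nonneg_right h1 ht
  rw [slope_def_field, sub_zero]
  have hw0 : w 0 = ⟪f' x, v⟫ := by simp [hw]
  have hwt : w t - w 0 = ⟪f' (x + t • v) - f' x, v⟫ := by
    rw [hw0]; simp [hw, inner_sub_left]
  have : 0 ≤ (w t - w 0) := by rw [hwt]; exact h2
  positivity

lemma aux_curve_deriv' {n : ℕ} {f' : E n → E n} {hess : E n → E n →L[ℝ] E n}
    (hhess : ∀ x, HasFDerivAt f' (hess x) x) (x v : E n) :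
    HasDerivAt (fun t : ℝ => f' (x + t • v)) (hess x v) 0 := by
  have hc : HasDerivAt (fun t : ℝ => x + t • v) v 0 := by
    simpa using ((hasDerivAt_id (0:ℝ)).smul_const v).const_add x
  have h3 : HasFDerivAt f' (hess x) (x + (0:ℝ) • v) := by simpa using hhess x
  exact h3.comp_hasDerivAt 0 hc

lemma aux_hess_bound {n : ℕ} {f' : E n → E n} {hess : E n → E n →L[ℝ] E n} {L₁ : ℝ}
    (hhess : ∀ x, HasFDerivAt f' (hess x) x)
    (hlip : ∀ y z : E n, ‖f' y - f' z‖ ≤ L₁ * ‖y - z‖) (x v : E n) :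
    ‖hess x v‖ ≤ L₁ * ‖v‖ := by
  set c : ℝ → E n := fun t => f' (x + t • v) with hc
  have hderiv : HasDerivAt c (hess x v) 0 := aux_curve_deriv' hhess x v
  have hslope : Tendsto (fun t => ‖slope c 0 t‖) (𝓝[>] 0) (𝓝 ‖hess x v‖) :=
    (continuous_norm.tendsto _).comp
      ((hasDerivAt_iff_tendsto_slope.1 hderiv).mono_left
        (nhdsWithin_mono _ (fun t ht => ne_of_gt ht)))
  refine le_of_tendsto hslope ?_
  filter_upwards [self_mem_nhdsWithin] with t (ht : 0 < t)
  have h1 : ‖c t - c 0‖ ≤ L₁ * (t * ‖v‖) := by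
    have := hlip (x + t • v) (x + (0:ℝ) • v)
    have e : (x + t • v) - (x + (0:ℝ) • v) = t • v := by
      rw [zero_smul, add_zero]; abel
    rw [e, norm_smul, Real.norm_eq_abs, abs_of_pos ht] at this
    simpa [hc, mul_assoc] using this
  rw [slope, sub_zero, norm_smul, Real.norm_eq_abs, abs_inv, abs_of_pos ht, inv_mul_le_iff₀ ht]
  calc ‖c t - c 0‖ ≤ L₁ * (t * ‖v‖) := h1
    _ = t * (L₁ * ‖v‖) := by ring

lemma aux_descent {n : ℕ} {f : E n → ℝ} {f' : E n → E n} {L₁ : ℝ}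
    (hgrad : ∀ x, HasGradientAt f (f' x) x)
    (hL₁ : 0 ≤ L₁)
    (hlip : ∀ y z : E n, ‖f' y - f' z‖ ≤ L₁ * ‖y - z‖) (x y : E n) :
    f y ≤ f x + ⟪f' x, y - x⟫ + L₁ * ‖y - x‖ ^ 2 := by
  set s : Set (E n) := Metric.closedBall x ‖y - x‖ with hs
  have hconv : Convex ℝ s := convex_closedBall _ _
  have hxs : x ∈ s := Metric.mem_closedBall_self (norm_nonneg _)
  have hys : y ∈ s := by
    simp [hs, Metric.mem_closedBall, dist_eq_norm]
  have hbound : ∀ z ∈ s, ‖(InnerProductSpace.toDual ℝ (E n) (f' z)) -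
      (InnerProductSpace.toDual ℝ (E n) (f' x))‖ ≤ L₁ * ‖y - x‖ := by
    intro z hz
    rw [← map_sub, (InnerProductSpace.toDual ℝ (E n)).norm_map]
    calc ‖f' z - f' x‖ ≤ L₁ * ‖z - x‖ := hlip z x
      _ ≤ L₁ * ‖y - x‖ := by
        have hz' : ‖z - x‖ ≤ ‖y - x‖ := by
          simpa [hs, Metric.mem_closedBall, dist_eq_norm] using hz
        exact mul_le_mul_of_nonneg_left hz' hL₁
  have := hconv.norm_image_sub_le_of_norm_hasFDerivWithin_le'
    (fun z _ => ((hgrad z).hasFDerivAt).hasFDerivWithinAt) hbound hxs hys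
  rw [InnerProductSpace.toDual_apply_apply] at this
  have h2 : f y - f x - ⟪f' x, y - x⟫ ≤ L₁ * ‖y - x‖ * ‖y - x‖ :=
    le_trans (le_abs_self _) (by simpa [Real.norm_eq_abs] using this)
  nlinarith [h2]

lemma aux_prox_strong {n : ℕ} {g : E n → ℝ} {prox : E n → E n}
    (hgconv : ConvexOn ℝ Set.univ g)
    (hprox : ∀ v u, (1/2) * ‖prox v - v‖ ^ 2 + g (prox v) ≤ (1/2) * ‖u - v‖ ^ 2 + g u)
    (v u : E n) :
    (1/2) * ‖prox v - v‖ ^ 2 + g (prox v) + (1/4) * ‖u - prox v‖ ^ 2 ≤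
      (1/2) * ‖u - v‖ ^ 2 + g u := by
  have hm := hprox v ((1/2 : ℝ) • (prox v + u))
  have hgm : g ((1/2 : ℝ) • (prox v + u)) ≤ (1/2) * g (prox v) + (1/2) * g u := by
    have := hgconv.2 (Set.mem_univ (prox v)) (Set.mem_univ u)
      (by norm_num : (0:ℝ) ≤ 1/2) (by norm_num : (0:ℝ) ≤ 1/2) (by norm_num)
    simpa [smul_add, smul_eq_mul] using this
  have hnorm : ‖(1/2 : ℝ) • (prox v + u) - v‖ ^ 2 =
      (1/2) * ‖prox v - v‖ ^ 2 + (1/2) * ‖u - v‖ ^ 2 - (1/4) * ‖prox v - u‖ ^ 2 := by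
    have e : (1/2 : ℝ) • (prox v + u) - v = (1/2 : ℝ) • ((prox v - v) + (u - v)) := by
      module
    have h1 : ‖(prox v - v) + (u - v)‖ ^ 2 =
        ‖prox v - v‖ ^ 2 + 2 * ⟪prox v - v, u - v⟫ + ‖u - v‖ ^ 2 := norm_add_sq_real _ _
    have h2 : ‖prox v - u‖ ^ 2 =
        ‖prox v - v‖ ^ 2 - 2 * ⟪prox v - v, u - v⟫ + ‖u - v‖ ^ 2 := by
      have e2 : prox v - u = (prox v - v) - (u - v) := by abel
      rw [e2]; exact norm_sub_sq_real _ _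
    rw [e, norm_smul, Real.norm_eq_abs, show |(1/2:ℝ)| = 1/2 by norm_num, mul_pow, h1, h2]
    ring
  have hpu : ‖u - prox v‖ = ‖prox v - u‖ := norm_sub_rev _ _
  rw [hnorm] at hm
  rw [hpu]
  linarith

lemma aux_prox_lip {n : ℕ} {g : E n → ℝ} {prox : E n → E n}
    (hgconv : ConvexOn ℝ Set.univ g)
    (hprox : ∀ v u, (1/2) * ‖prox v - v‖ ^ 2 + g (prox v) ≤ (1/2) * ‖u - v‖ ^ 2 + g u)
    (v w : E n) : ‖prox v - prox w‖ ≤ 2 * ‖v - w‖ := by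
  have h1 := aux_prox_strong hgconv hprox v (prox w)
  have h2 := aux_prox_strong hgconv hprox w (prox v)
  have hid : ‖prox w - v‖ ^ 2 - ‖prox v - v‖ ^ 2 + ‖prox v - w‖ ^ 2 - ‖prox w - w‖ ^ 2 =
      2 * ⟪prox w - prox v, w - v⟫ := by
    have e1 : ‖prox w - v‖ ^ 2 = ‖prox w‖ ^ 2 - 2 * ⟪prox w, v⟫ + ‖v‖ ^ 2 :=
      norm_sub_sq_real _ _
    have e2 : ‖prox v - v‖ ^ 2 = ‖prox v‖ ^ 2 - 2 * ⟪prox v, v⟫ + ‖v‖ ^ 2 :=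
      norm_sub_sq_real _ _
    have e3 : ‖prox v - w‖ ^ 2 = ‖prox v‖ ^ 2 - 2 * ⟪prox v, w⟫ + ‖w‖ ^ 2 :=
      norm_sub_sq_real _ _
    have e4 : ‖prox w - w‖ ^ 2 = ‖prox w‖ ^ 2 - 2 * ⟪prox w, w⟫ + ‖w‖ ^ 2 :=
      norm_sub_sq_real _ _
    have e5 : ⟪prox w - prox v, w - v⟫ =
        ⟪prox w, w⟫ - ⟪prox w, v⟫ - ⟪prox v, w⟫ + ⟪prox v, v⟫ := by
      rw [inner_sub_left, inner_sub_right, inner_sub_right]; ring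
    rw [e1, e2, e3, e4, e5]; ring
  have hcs : ⟪prox w - prox v, w - v⟫ ≤ ‖prox w - prox v‖ * ‖w - v‖ :=
    real_inner_le_norm _ _
  have hrev1 : ‖prox w - prox v‖ = ‖prox v - prox w‖ := norm_sub_rev _ _
  have hrev2 : ‖w - v‖ = ‖v - w‖ := norm_sub_rev _ _
  rw [hrev1, hrev2] at hcs
  rw [hrev1] at h1
  have hk : ‖prox v - prox w‖ ^ 2 ≤ 2 * (‖prox v - prox w‖ * ‖v - w‖) := by
    nlinarith [h1, h2, hid, hcs]
  rcases eq_or_lt_of_le (norm_nonneg (prox v - prox w)) with h0 | h0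
  · rw [← h0]; positivity
  · nlinarith [hk]
set_option maxHeartbeats 2000000 in
theorem stmt6 {n : ℕ} (f g : E n → ℝ) (f' : E n → E n)
    (hess : E n → E n →L[ℝ] E n) (prox : E n → E n)
    (hfconv : ConvexOn ℝ Set.univ f) (hfC2 : ContDiff ℝ 2 f)
    (hgrad : ∀ x, HasGradientAt f (f' x) x)
    (hhess : ∀ x, HasFDerivAt f' (hess x) x)
    (hsa : ∀ x u w, ⟪hess x u, w⟫ = ⟪u, hess x w⟫)
    (hgconv : ConvexOn ℝ Set.univ g) (hgcont : Continuous g)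
    (hprox : ∀ v u, (1/2) * ‖prox v - v‖ ^ 2 + g (prox v) ≤ (1/2) * ‖u - v‖ ^ 2 + g u)
    (F : E n → ℝ) (hF : ∀ y, F y = f y + g y)
    (X : Set (E n)) (hX : X = {y | ∀ z, F y ≤ F z}) (hXne : X.Nonempty)
    (r : E n → ℝ) (hr : ∀ y, r y = ‖y - prox (y - f' y)‖)
    (L₁ : ℝ) (hL₁ : 0 < L₁) (hlip : ∀ y z, ‖f' y - f' z‖ ≤ L₁ * ‖y - z‖)
    -- IRPN parameters
    (θ ζ η c ρ β : ℝ)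
    (hθ : θ ∈ Set.Ioo (0:ℝ) (1/2)) (hζ : ζ ∈ Set.Ioo θ (1/2))
    (hη : η ∈ Set.Ioo (0:ℝ) 1) (hc : 0 < c) (hρ : ρ ∈ Set.Icc (0:ℝ) 1)
    (hβ : β ∈ Set.Ioo (0:ℝ) 1)
    -- IRPN iterates and auxiliary data
    (x xh : ℕ → E n) (μ : ℕ → ℝ) (H : ℕ → E n →L[ℝ] E n)
    (ℓ q : ℕ → E n → ℝ) (rk : ℕ → E n → ℝ)
    (d : ℕ → E n) (i : ℕ → ℕ) (α : ℕ → ℝ)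
    (hrpos : ∀ k, 0 < r (x k))
    (hμ : ∀ k, μ k = c * r (x k) ^ ρ)
    (hH : ∀ k, H k = hess (x k) + μ k • ContinuousLinearMap.id ℝ (E n))
    (hℓ : ∀ k y, ℓ k y = f (x k) + ⟪f' (x k), y - x k⟫ + g y)
    (hq : ∀ k y, q k y = ℓ k y + (1/2) * ⟪H k (y - x k), y - x k⟫)
    (hrk : ∀ k y, rk k y = ‖y - prox (y - f' (x k) - H k (y - x k))‖)
    (hinex1 : ∀ k, rk k (xh k) ≤ η * min (r (x k)) (r (x k) ^ (1 + ρ)))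
    (hinex2 : ∀ k, q k (xh k) - q k (x k) ≤ ζ * (ℓ k (xh k) - ℓ k (x k)))
    (hd : ∀ k, d k = xh k - x k)
    (hdesc : ∀ k, F (x k) - F (x k + β ^ i k • d k) ≥
      θ * (ℓ k (x k) - ℓ k (x k + β ^ i k • d k)))
    (hmin : ∀ k j, j < i k → ¬ (F (x k) - F (x k + β ^ j • d k) ≥
      θ * (ℓ k (x k) - ℓ k (x k + β ^ j • d k))))
    (hα : ∀ k, α k = β ^ i k)
    (hstep : ∀ k, x (k + 1) = x k + α k • d k)
    :
    Tendsto (fun k => r (x k)) atTop (nhds 0) ∧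
      ∀ xstar : E n, MapClusterPt xstar atTop x → r xstar = 0 ∧ xstar ∈ X := by
  obtain ⟨θ0, θhalf⟩ := hθ
  obtain ⟨ζθ, ζhalf⟩ := hζ
  obtain ⟨η0, η1⟩ := hη
  obtain ⟨ρ0, ρ1⟩ := hρ
  obtain ⟨β0, β1⟩ := hβ
  have hζ1 : (0:ℝ) < 1 - ζ := by linarith
  have hθ1 : (0:ℝ) < 1 - θ := by linarith
  have hη1' : (0:ℝ) < 1 - η := by linarith
  obtain ⟨xm, hxm⟩ := hXne
  have hFlb : ∀ y, F xm ≤ F y := by rw [hX] at hxm; exact hxm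
  have hgle : ∀ a b : E n, f a + ⟪f' a, b - a⟫ ≤ f b := aux_grad_le hfconv hgrad
  have hmono' : ∀ a b : E n, 0 ≤ ⟪f' b - f' a, b - a⟫ := fun a b => aux_mono hgle a b
  have hpsd : ∀ a v : E n, 0 ≤ ⟪hess a v, v⟫ := aux_hess_psd hmono' hhess
  have hhb : ∀ a v : E n, ‖hess a v‖ ≤ L₁ * ‖v‖ := aux_hess_bound hhess hlip
  have hdescent : ∀ a b : E n, f b ≤ f a + ⟪f' a, b - a⟫ + L₁ * ‖b - a‖ ^ 2 :=
    aux_descent hgrad hL₁.le hlip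
  have hplip : ∀ v w : E n, ‖prox v - prox w‖ ≤ 2 * ‖v - w‖ := aux_prox_lip hgconv hprox
  -- basic facts
  have hμpos : ∀ k, 0 < μ k := by
    intro k; rw [hμ]
    exact mul_pos hc (Real.rpow_pos_of_pos (hrpos k) ρ)
  have hαpos : ∀ k, 0 < α k := fun k => (hα k) ▸ pow_pos β0 _
  have hα1 : ∀ k, α k ≤ 1 := fun k => (hα k) ▸ pow_le_one₀ β0.le β1.le
  have hFx : ∀ k, F (x k) = ℓ k (x k) := by
    intro k; rw [hF, hℓ]; simp
  -- (a)
  have hA : ∀ k, μ k * ‖d k‖ ^ 2 ≤ 2 * (1 - ζ) * (ℓ k (x k) - ℓ k (xh k)) := by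
    intro k
    have h2 := hinex2 k
    have hqx : q k (x k) = ℓ k (x k) := by rw [hq]; simp
    have hHdd : ⟪H k (d k), d k⟫ = ⟪hess (x k) (d k), d k⟫ + μ k * ‖d k‖ ^ 2 := by
      rw [hH, ContinuousLinearMap.add_apply, ContinuousLinearMap.smul_apply,
        ContinuousLinearMap.id_apply, inner_add_left, real_inner_smul_left,
        real_inner_self_eq_norm_sq]
    have hqxh : q k (xh k) = ℓ k (xh k) +
        (1/2) * (⟪hess (x k) (d k), d k⟫ + μ k * ‖d k‖ ^ 2) := by
      rw [hq, ← hHdd]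
      have : xh k - x k = d k := (hd k).symm
      rw [this]
    have hS := hpsd (x k) (d k)
    rw [hqx, hqxh] at h2
    linarith
  have hAnn : ∀ k, 0 ≤ ℓ k (x k) - ℓ k (xh k) := by
    intro k
    have := hA k
    nlinarith [mul_nonneg (hμpos k).le (sq_nonneg ‖d k‖)]
  -- (b) segment inequality for ℓ
  have hseg : ∀ k, ∀ t : ℝ, 0 ≤ t → t ≤ 1 →
      ℓ k (x k + t • d k) ≤ ℓ k (x k) + t * (ℓ k (xh k) - ℓ k (x k)) := by
    intro k t ht0 ht1
    have hpt : (1 - t) • x k + t • xh k = x k + t • d k := by rw [hd]; module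
    have hg' := hgconv.2 (Set.mem_univ (x k)) (Set.mem_univ (xh k))
      (by linarith : (0:ℝ) ≤ 1 - t) ht0 (by ring)
    rw [hpt] at hg'
    simp only [smul_eq_mul] at hg'
    rw [hℓ, hℓ, hℓ]
    have e1 : x k + t • d k - x k = t • d k := by abel
    have e2 : xh k - x k = d k := (hd k).symm
    rw [e1, e2, real_inner_smul_right]
    simp only [sub_self, inner_zero_right]
    linarith
  -- (c) descent bound for F
  have hFdesc : ∀ k, ∀ t : ℝ, 0 ≤ t →
      F (x k + t • d k) ≤ ℓ k (x k + t • d k) + L₁ * t ^ 2 * ‖d k‖ ^ 2 := by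
    intro k t ht0
    have h1 := hdescent (x k) (x k + t • d k)
    have e1 : x k + t • d k - x k = t • d k := by abel
    rw [e1] at h1
    have e2 : ‖t • d k‖ ^ 2 = t ^ 2 * ‖d k‖ ^ 2 := by
      rw [norm_smul, Real.norm_eq_abs, mul_pow, sq_abs]
    rw [e2] at h1
    rw [hF, hℓ, e1]
    linarith
  -- (d) d k ≠ 0
  have hdpos : ∀ k, 0 < ‖d k‖ := by
    intro k
    rcases eq_or_ne (d k) 0 with h0 | h0
    · exfalso
      have hxx : xh k = x k := by
        have := hd k; rw [h0] at this; exact (sub_eq_zero.1 this.symm)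
      have h1 := hinex1 k
      rw [hxx, hrk] at h1
      simp only [sub_self, map_zero, sub_zero] at h1
      rw [← hr (x k)] at h1
      have h2 : min (r (x k)) (r (x k) ^ (1 + ρ)) ≤ r (x k) := min_le_left _ _
      nlinarith [hrpos k]
    · exact norm_pos_iff.2 h0
  -- (e) lower bound on ‖d k‖
  have hdlow : ∀ k, (1 - η) * r (x k) ≤ (3 + 2 * L₁ + 2 * μ k) * ‖d k‖ := by
    intro k
    have h1 : r (x k) = ‖x k - prox (x k - f' (x k))‖ := hr _
    have htri : ‖x k - prox (x k - f' (x k))‖ ≤ ‖x k - xh k‖ +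
        ‖xh k - prox (xh k - f' (x k) - H k (d k))‖ +
        ‖prox (xh k - f' (x k) - H k (d k)) - prox (x k - f' (x k))‖ := by
      calc ‖x k - prox (x k - f' (x k))‖
          ≤ ‖x k - xh k‖ + ‖xh k - prox (x k - f' (x k))‖ := norm_sub_le_norm_sub_add_norm_sub _ _ _
        _ ≤ ‖x k - xh k‖ + (‖xh k - prox (xh k - f' (x k) - H k (d k))‖ +
            ‖prox (xh k - f' (x k) - H k (d k)) - prox (x k - f' (x k))‖) := by
            gcongr
            exact norm_sub_le_norm_sub_add_norm_sub _ _ _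
        _ = _ := by ring
    have h2 : ‖xh k - prox (xh k - f' (x k) - H k (d k))‖ ≤ η * r (x k) := by
      have h1' := hinex1 k
      rw [hrk] at h1'
      have e2 : xh k - x k = d k := (hd k).symm
      rw [e2] at h1'
      calc ‖xh k - prox (xh k - f' (x k) - H k (d k))‖
          ≤ η * min (r (x k)) (r (x k) ^ (1 + ρ)) := h1'
        _ ≤ η * r (x k) := by
            exact mul_le_mul_of_nonneg_left (min_le_left _ _) η0.le
    have h3 : ‖prox (xh k - f' (x k) - H k (d k)) - prox (x k - f' (x k))‖ ≤
        2 * ‖d k - H k (d k)‖ := by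
      have := hplip (xh k - f' (x k) - H k (d k)) (x k - f' (x k))
      have e3 : (xh k - f' (x k) - H k (d k)) - (x k - f' (x k)) = d k - H k (d k) := by
        rw [hd]; abel
      rw [e3] at this
      exact this
    have h4 : ‖H k (d k)‖ ≤ (L₁ + μ k) * ‖d k‖ := by
      rw [hH]
      simp only [ContinuousLinearMap.add_apply, ContinuousLinearMap.smul_apply,
        ContinuousLinearMap.id_apply]
      calc ‖hess (x k) (d k) + μ k • d k‖ ≤ ‖hess (x k) (d k)‖ + ‖μ k • d k‖ := norm_add_le _ _
        _ ≤ L₁ * ‖d k‖ + μ k * ‖d k‖ := by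
            gcongr
            · exact hhb _ _
            · rw [norm_smul, Real.norm_eq_abs, abs_of_pos (hμpos k)]
        _ = (L₁ + μ k) * ‖d k‖ := by ring
    have h5 : ‖d k - H k (d k)‖ ≤ (1 + L₁ + μ k) * ‖d k‖ := by
      calc ‖d k - H k (d k)‖ ≤ ‖d k‖ + ‖H k (d k)‖ := norm_sub_le _ _
        _ ≤ ‖d k‖ + (L₁ + μ k) * ‖d k‖ := by linarith
        _ = (1 + L₁ + μ k) * ‖d k‖ := by ring
    have h6 : ‖x k - xh k‖ = ‖d k‖ := by
      rw [hd, norm_sub_rev]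
    rw [h1]
    nlinarith [htri, h2, h3, h5, h6]
  -- (f) step-size lower bound
  have hαlow : ∀ k, min 1 (β * (1 - θ) * μ k / (2 * (1 - ζ) * L₁)) ≤ α k := by
    intro k
    rw [hα]
    rcases Nat.eq_zero_or_pos (i k) with h0 | hposik
    · rw [h0, pow_zero]; exact min_le_left _ _
    · obtain ⟨j, hj⟩ : ∃ j, i k = j + 1 := ⟨i k - 1, (Nat.succ_pred_eq_of_pos hposik).symm⟩
      have hfail := hmin k j (by omega)
      push_neg at hfail
      set t := β ^ j with ht
      have ht0 : 0 < t := pow_pos β0 j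
      have ht1 : t ≤ 1 := pow_le_one₀ β0.le β1.le
      have hc' := hFdesc k t ht0.le
      have hseg' := hseg k t ht0.le ht1
      have h5 : (1 - θ) * (ℓ k (x k) - ℓ k (x k + t • d k)) < L₁ * t ^ 2 * ‖d k‖ ^ 2 := by
        linarith [hfail, hc', hFx k]
      have h6 : t * (ℓ k (x k) - ℓ k (xh k)) ≤ ℓ k (x k) - ℓ k (x k + t • d k) := by
        linarith [hseg']
      have h8 : (1 - θ) * (t * (ℓ k (x k) - ℓ k (xh k))) < L₁ * t ^ 2 * ‖d k‖ ^ 2 := by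
        have hint := mul_le_mul_of_nonneg_left h6 hθ1.le
        linarith [hint, h5]
      have h9 : (1 - θ) * μ k * (t * ‖d k‖ ^ 2) <
          2 * (1 - ζ) * L₁ * t * (t * ‖d k‖ ^ 2) := by
        have hint1 := mul_le_mul_of_nonneg_left (hA k)
          (mul_nonneg hθ1.le ht0.le : (0:ℝ) ≤ (1 - θ) * t)
        have hint2 := mul_lt_mul_of_pos_left h8 hζ1
        linarith [hint1, hint2]
      have hpos2 : 0 < t * ‖d k‖ ^ 2 := by
        have := hdpos k; positivity
      have h10 : (1 - θ) * μ k < 2 * (1 - ζ) * L₁ * t :=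
        lt_of_mul_lt_mul_right h9 hpos2.le
      refine le_trans (min_le_right _ _) ?_
      rw [div_le_iff₀ (by positivity : (0:ℝ) < 2 * (1 - ζ) * L₁)]
      have : β ^ (j + 1) = β * t := by rw [pow_succ]; ring
      rw [hj, this]
      have hint := mul_lt_mul_of_pos_left h10 β0
      linarith [hint]
  -- (g) sufficient decrease
  have hdec : ∀ k, θ * (α k * (μ k * ‖d k‖ ^ 2)) ≤
      2 * (1 - ζ) * (F (x k) - F (x (k + 1))) := by
    intro k
    have hd1 := hdesc k
    rw [← hα k] at hd1
    rw [hstep k]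
    have hseg' := hseg k (α k) (hαpos k).le (hα1 k)
    have e1 : θ * (α k * (ℓ k (x k) - ℓ k (xh k))) ≤
        F (x k) - F (x k + α k • d k) := by
      have hint := mul_le_mul_of_nonneg_left
        (show α k * (ℓ k (x k) - ℓ k (xh k)) ≤ ℓ k (x k) - ℓ k (x k + α k • d k) by
          linarith [hseg']) θ0.le
      linarith [hint, hd1]
    have e2 : θ * (α k * (μ k * ‖d k‖ ^ 2)) ≤
        θ * (α k * (2 * (1 - ζ) * (ℓ k (x k) - ℓ k (xh k)))) := by
      have hint := mul_le_mul_of_nonneg_left (hA k)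
        (mul_nonneg θ0.le (hαpos k).le : (0:ℝ) ≤ θ * α k)
      linarith [hint]
    have hint2 := mul_le_mul_of_nonneg_left e1
      (by positivity : (0:ℝ) ≤ 2 * (1 - ζ))
    linarith [e2, hint2]
  have hanti : Antitone (fun k => F (x k)) := by
    apply antitone_nat_of_succ_le
    intro k
    have h1 : (0:ℝ) ≤ 2 * (1 - ζ) * (F (x k) - F (x (k + 1))) :=
      le_trans (mul_nonneg θ0.le (mul_nonneg (hαpos k).le
        (mul_nonneg (hμpos k).le (sq_nonneg ‖d k‖)))) (hdec k)
    have h2 : (0:ℝ) ≤ F (x k) - F (x (k + 1)) := by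
      by_contra hcon
      push_neg at hcon
      nlinarith [h1, mul_pos hζ1 (neg_pos.2 hcon)]
    linarith
  have hbdd : BddBelow (Set.range fun k => F (x k)) := by
    refine ⟨F xm, ?_⟩
    rintro v ⟨k, rfl⟩
    exact hFlb _
  have hconvF := tendsto_atTop_ciInf hanti hbdd
  have hdiff : Tendsto (fun k => F (x k) - F (x (k + 1))) atTop (𝓝 0) := by
    have h2 : Tendsto (fun k => F (x (k + 1))) atTop (𝓝 (⨅ k, F (x k))) :=
      hconvF.comp (tendsto_add_atTop_nat 1)
    have h3 := hconvF.sub h2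
    rw [sub_self] at h3
    exact h3.congr fun k => rfl
  have hrnonneg : ∀ y, 0 ≤ r y := fun y => (hr y) ▸ norm_nonneg _
  have hμhigh : ∀ k, μ k ≤ c * (1 + r (x k)) := by
    intro k
    rw [hμ]
    have h1 : r (x k) ^ ρ ≤ 1 + r (x k) := by
      rcases le_or_gt (r (x k)) 1 with h | h
      · have := Real.rpow_le_one (hrnonneg _) h ρ0
        linarith [hrpos k]
      · have h2 := Real.rpow_le_rpow_of_exponent_le h.le ρ1
        rw [Real.rpow_one] at h2
        linarith
    exact mul_le_mul_of_nonneg_left h1 hc.le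
  have hrt : Tendsto (fun k => r (x k)) atTop (𝓝 0) := by
    rw [Metric.tendsto_atTop]
    intro ε hε
    set ε' := min ε 1 with hε'def
    have hε'pos : 0 < ε' := lt_min hε one_pos
    have hε'leε : ε' ≤ ε := min_le_left _ _
    set K : ℝ := 3 + 2 * L₁ + 2 * c with hK
    have hKpos : 0 < K := by positivity
    set D : ℝ := (1 - η) * ε' / (K + 2 * c * ε') with hD
    have hDpos : 0 < D := div_pos (mul_pos hη1' hε'pos) (by positivity)
    set A : ℝ := min 1 (β * (1 - θ) * (c * ε') / (2 * (1 - ζ) * L₁)) with hAdef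
    have hApos : 0 < A := lt_min one_pos
      (div_pos (mul_pos (mul_pos β0 hθ1) (mul_pos hc hε'pos)) (by positivity))
    set δ : ℝ := θ * (A * ((c * ε') * D ^ 2)) / (2 * (1 - ζ)) with hδdef
    have hδpos : 0 < δ :=
      div_pos (mul_pos θ0 (mul_pos hApos (mul_pos (mul_pos hc hε'pos)
        (pow_pos hDpos 2)))) (by positivity)
    obtain ⟨N, hN⟩ := (Metric.tendsto_atTop.1 hdiff) δ hδpos
    refine ⟨N, fun k hk => ?_⟩
    have hd' := hN k hk
    rw [Real.dist_eq, sub_zero] at hd' ⊢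
    rw [abs_of_nonneg (hrnonneg _)]
    by_contra hcon
    push_neg at hcon
    have hrk' : ε' ≤ r (x k) := le_trans hε'leε hcon
    have hμlow : c * ε' ≤ μ k := by
      rw [hμ]
      have h1 : ε' ≤ r (x k) ^ ρ := by
        rcases le_or_gt 1 (r (x k)) with h | h
        · exact le_trans (min_le_right _ _) (Real.one_le_rpow h ρ0)
        · have h2 := Real.rpow_le_rpow_of_exponent_ge (hrpos k) h.le ρ1
          rw [Real.rpow_one] at h2
          linarith [hrk']
      exact mul_le_mul_of_nonneg_left h1 hc.le
    have hdD : D ≤ ‖d k‖ := by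
      have h1 : (1 - η) * r (x k) ≤ (K + 2 * c * r (x k)) * ‖d k‖ := by
        have ha := hdlow k
        have hb := mul_le_mul_of_nonneg_right (hμhigh k) (norm_nonneg (d k))
        rw [hK]
        nlinarith [ha, hb]
      rw [hD, div_le_iff₀ (by positivity)]
      nlinarith [mul_le_mul_of_nonneg_right h1 hε'pos.le, hrk', hε'pos,
        norm_nonneg (d k), hKpos, mul_nonneg (mul_nonneg hKpos.le (norm_nonneg (d k)))
          (sub_nonneg.2 hrk'), hrpos k]
    have hαA : A ≤ α k := by
      refine le_trans ?_ (hαlow k)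
      refine min_le_min le_rfl ?_
      gcongr
    have hfinal : δ ≤ F (x k) - F (x (k + 1)) := by
      have h1 : δ * (2 * (1 - ζ)) ≤ θ * (α k * (μ k * ‖d k‖ ^ 2)) := by
        rw [hδdef, div_mul_cancel₀ _ (by positivity : (2 * (1 - ζ) : ℝ) ≠ 0)]
        gcongr <;>
          first
            | exact hαA
            | exact hμlow
            | exact hdD
            | exact (hαpos k).le
            | exact (hμpos k).le
            | exact hDpos.le
            | exact hApos.le
            | positivity
      have h2 := hdec k
      have h3 : (2 * (1 - ζ)) * δ ≤ (2 * (1 - ζ)) * (F (x k) - F (x (k + 1))) := by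
        linarith [h1, h2]
      exact le_of_mul_le_mul_left h3 (by positivity)
    linarith [le_trans hfinal (le_abs_self _), hd']
  have hproxcont : Continuous prox := by
    have hlw : LipschitzWith 2 prox := by
      refine LipschitzWith.of_dist_le_mul fun v w => ?_
      rw [dist_eq_norm, dist_eq_norm]
      simpa using hplip v w
    exact hlw.continuous
  have hf'cont : Continuous f' := by
    have hdf : Differentiable ℝ f' := fun z => (hhess z).differentiableAt
    exact hdf.continuous
  have hrcont : Continuous r := by
    have he : r = fun y => ‖y - prox (y - f' y)‖ := funext hr
    rw [he]
    exact (continuous_id.sub (hproxcont.comp (continuous_id.sub hf'cont))).norm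
  refine ⟨hrt, fun xstar hcp => ?_⟩
  obtain ⟨ψ, hψmono, hψtends⟩ := TopologicalSpace.FirstCountableTopology.tendsto_subseq hcp
  have h1 : Tendsto (fun m => r (x (ψ m))) atTop (𝓝 (r xstar)) :=
    (hrcont.continuousAt.tendsto).comp hψtends
  have h2 : Tendsto (fun m => r (x (ψ m))) atTop (𝓝 0) :=
    hrt.comp hψmono.tendsto_atTop
  have hr0 : r xstar = 0 := tendsto_nhds_unique h1 h2
  refine ⟨hr0, ?_⟩
  rw [hX]
  intro u
  have hpx : prox (xstar - f' xstar) = xstar := by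
    have h3 := hr xstar
    rw [hr0] at h3
    have h4 : xstar - prox (xstar - f' xstar) = 0 := norm_eq_zero.1 h3.symm
    have := sub_eq_zero.1 h4
    exact this.symm
  have hvar : 0 ≤ ⟪f' xstar, u - xstar⟫ + (g u - g xstar) := by
    by_contra hAneg
    push_neg at hAneg
    set s : ℝ := ‖u - xstar‖ ^ 2 with hs
    have hs0 : (0:ℝ) ≤ s := by positivity
    set t : ℝ := min 1 ((-(⟪f' xstar, u - xstar⟫ + (g u - g xstar))) / (s + 1)) with htd
    have ht0 : 0 < t := lt_min one_pos (div_pos (by linarith) (by positivity))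
    have ht1 : t ≤ 1 := min_le_left _ _
    have hmem := hprox (xstar - f' xstar) (xstar + t • (u - xstar))
    rw [hpx] at hmem
    have e1 : xstar - (xstar - f' xstar) = f' xstar := by abel
    have e2 : xstar + t • (u - xstar) - (xstar - f' xstar) =
        f' xstar + t • (u - xstar) := by abel
    rw [e1, e2] at hmem
    have hnorm : ‖f' xstar + t • (u - xstar)‖ ^ 2 =
        ‖f' xstar‖ ^ 2 + 2 * (t * ⟪f' xstar, u - xstar⟫) + t ^ 2 * s := by
      rw [norm_add_sq_real, real_inner_smul_right, norm_smul, Real.norm_eq_abs,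
        mul_pow, sq_abs]
    have hgc : g (xstar + t • (u - xstar)) ≤ (1 - t) * g xstar + t * g u := by
      have hpt : (1 - t) • xstar + t • u = xstar + t • (u - xstar) := by module
      rw [← hpt]
      have := hgconv.2 (Set.mem_univ xstar) (Set.mem_univ u)
        (by linarith : (0:ℝ) ≤ 1 - t) ht0.le (by ring)
      simpa [smul_eq_mul] using this
    rw [hnorm] at hmem
    have key : 0 ≤ t * ⟪f' xstar, u - xstar⟫ + t ^ 2 * s / 2 +
        t * (g u - g xstar) := by
      linarith [hmem, hgc]
    have key2 : 0 ≤ (⟪f' xstar, u - xstar⟫ + (g u - g xstar)) + t * s / 2 := by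
      by_contra hneg
      push_neg at hneg
      nlinarith [key, mul_pos ht0 (neg_pos.2 hneg)]
    have ht2 : t ≤ (-(⟪f' xstar, u - xstar⟫ + (g u - g xstar))) / (s + 1) :=
      min_le_right _ _
    rw [le_div_iff₀ (by positivity : (0:ℝ) < s + 1)] at ht2
    linarith [key2, ht2, ht0, mul_nonneg ht0.le hs0]
  have hgi := hgle xstar u
  rw [hF, hF]
  linarith [hvar, hgi]
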